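/- With C = CPO and ▷ = (-)_⊥ as above, the guarded fixpoint operator given by least fixed points is not unique: there exists a cpo X and a continuous map f : X_⊥ → X admitting two distinct morphisms s : 1 → X with s = f ∘ p_X ∘ s. Concretely, for X = {0,1} the two-element chain and f : X_⊥ → X with f(⊥) = f(0) = 0 and f(1) = 1, both constant maps 0 and 1 satisfy the fixpoint equation. -/

import Mathlib

lemma aux_mono : Monotone (fun x : WithBot Bool => x.getD false) := by
  intro a b h
  match a, b with
  | ⊥, _ => exact Bool.false_le _
  | (a : Bool), ⊥ => exact absurd h (by simp)
  | (a : Bool), (b : Bool) => exact WithBot.coe_le_coe.mp h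

/-- Non-uniqueness of guarded fixpoints in `(CPO, (-)_⊥)`: for the two-element chain
`X = Bool` (`false ≤ true`) there is a continuous `f : X_⊥ → X` with `f ⊥ = f false = false`
and `f true = true` such that both elements `false` and `true` satisfy the fixpoint
equation `x = f (p_X x)`. -/
theorem stmt4 :
    ∃ f : WithBot Bool → Bool,
      Monotone f ∧
      (∀ c : ℕ → WithBot Bool, Monotone c →
        ∀ l, IsLUB (Set.range c) l → IsLUB (Set.range fun k => f (c k)) (f l)) ∧
      f ⊥ = false ∧ f ((false : Bool) : WithBot Bool) = false ∧
      f ((true : Bool) : WithBot Bool) = true ∧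
      (false : Bool) = f ((false : Bool) : WithBot Bool) ∧
      (true : Bool) = f ((true : Bool) : WithBot Bool) ∧
      (false : Bool) ≠ true := by
  refine ⟨fun x => x.getD false, aux_mono, ?_, rfl, rfl, rfl, rfl, rfl, by simp⟩
  intro c _ l hl
  constructor
  · rintro _ ⟨k, rfl⟩
    exact aux_mono (hl.1 ⟨k, rfl⟩)
  · rintro b hb
    cases b with
    | true => exact le_top
    | false =>
      have hcl : l ≤ ((false : Bool) : WithBot Bool) := by
        apply hl.2
        rintro _ ⟨k, rfl⟩
        have h1 : (c k).getD false ≤ false := hb ⟨k, rfl⟩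
        match hck : c k with
        | ⊥ => exact bot_le
        | (x : Bool) =>
          rw [hck] at h1
          simp at h1
          simp [h1]
      exact aux_mono hcl
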